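/- Let ε ∈ (0,1), C, d ≥ 1, and s ∈ (0,d). Then for all sufficiently small δ ∈ 2^{-ℕ} the following holds. Let μ be a Borel probability measure on ℝ^d with mollified Riesz energy I_s^δ(μ) ≤ C, and let K ⊂ B(1) ⊂ ℝ^d be a Borel set with μ(K) ≥ δ^ε. Then there exists a nonempty family 𝒫 of dyadic δ-cubes meeting K which is a (δ,s,C')-set with C' ≤ O_d(C δ^{-3ε}), i.e. |𝒫 ∩ Q| ≤ C' Δ^s |𝒫| for every dyadic cube Q of side-length Δ ∈ [δ,1]. -/

import Mathlib

open MeasureTheory Metric Set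
open scoped ENNReal

noncomputable section

/-- Euclidean space `ℝ^d`. -/
abbrev Ed (d : ℕ) : Type := EuclideanSpace ℝ (Fin d)

/-- `ψ` is a standard approximate-identity profile on `ℝ^d`: radially decreasing,
`∫ ψ = 1`, and `1_{B(1/2)} ≤ ψ ≤ 1_{B(1)}`. -/
def IsApproxId (d : ℕ) (ψ : Ed d → ℝ) : Prop :=
  (∀ x y : Ed d, ‖x‖ ≤ ‖y‖ → ψ y ≤ ψ x) ∧
  (∫ x, ψ x = 1) ∧
  (∀ x : Ed d, ‖x‖ ≤ 1/2 → 1 ≤ ψ x) ∧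
  (∀ x : Ed d, ψ x ≤ 1) ∧
  (∀ x : Ed d, 0 ≤ ψ x) ∧
  (∀ x : Ed d, 1 < ‖x‖ → ψ x = 0)

/-- The mollified density `ν_δ(x) = (ν ∗ ψ_δ)(x)`, where `ψ_δ(x) = δ^{-d} ψ(x/δ)`. -/
def mollify (d : ℕ) (ψ : Ed d → ℝ) (δ : ℝ) (ν : Measure (Ed d)) (x : Ed d) : ℝ :=
  ∫ y, (δ ^ d)⁻¹ * ψ (δ⁻¹ • (x - y)) ∂ν

/-- The mollified Riesz energy `I_u^δ(ν) = ∬ |x−y|^{-u} ν_δ(x) ν_δ(y) dx dy`. -/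
def mollE (d : ℕ) (ψ : Ed d → ℝ) (u δ : ℝ) (ν : Measure (Ed d)) : ℝ≥0∞ :=
  ∫⁻ x, ∫⁻ y, edist x y ^ (-u) * ENNReal.ofReal (mollify d ψ δ ν x) *
    ENNReal.ofReal (mollify d ψ δ ν y) ∂volume ∂volume

/-- The dyadic cube of side-length `2⁻ⁿ` in `ℝ^d` with index `v ∈ ℤ^d`. -/
def dyCube (d : ℕ) (n : ℕ) (v : Fin d → ℤ) : Set (Ed d) :=
  {x : Ed d | ∀ i, x i ∈ Set.Ico ((v i : ℝ) * ((2:ℝ) ^ n)⁻¹) (((v i : ℝ) + 1) * ((2:ℝ) ^ n)⁻¹)}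

set_option maxHeartbeats 4000000

lemma psi_measurable {d : ℕ} (hd : 1 ≤ d) (ψ : Ed d → ℝ)
    (hmono : ∀ x y : Ed d, ‖x‖ ≤ ‖y‖ → ψ y ≤ ψ x) : Measurable ψ := by
  have : Nonempty (Fin d) := ⟨⟨0, hd⟩⟩
  set e : Ed d := EuclideanSpace.single (⟨0, hd⟩ : Fin d) (1:ℝ) with he
  have hne : ‖e‖ = 1 := by simp [he, EuclideanSpace.norm_single]
  have hnorm : ∀ t : ℝ, 0 ≤ t → ‖t • e‖ = t := by
    intro t ht
    rw [norm_smul, hne, Real.norm_eq_abs, abs_of_nonneg ht, mul_one]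
  set g : ℝ → ℝ := fun u => ψ ((max u 0) • e) with hg
  have hanti : Antitone g := by
    intro u v huv
    apply hmono
    rw [hnorm _ (le_max_right u 0), hnorm _ (le_max_right v 0)]
    exact max_le_max huv le_rfl
  have hcomp : ψ = fun x => g ‖x‖ := by
    funext x
    have h1 : ‖(max ‖x‖ 0) • e‖ = ‖x‖ := by
      rw [hnorm _ (le_max_right _ 0), max_eq_left (norm_nonneg x)]
    exact le_antisymm (hmono _ _ h1.le) (hmono _ _ h1.ge)
  rw [hcomp]
  exact hanti.measurable.comp measurable_norm

lemma mem_dyCube {d n : ℕ} {v : Fin d → ℤ} {x : Ed d} :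
    x ∈ dyCube d n v ↔ ∀ i, ⌊x i * 2 ^ n⌋ = v i := by
  have h2 : (0:ℝ) < 2 ^ n := by positivity
  constructor <;> intro h i <;> have hi := h i
  · rw [Int.floor_eq_iff]
    obtain ⟨h1', h2'⟩ := hi
    constructor
    · rwa [← div_eq_mul_inv, div_le_iff₀ h2] at h1'
    · rwa [← div_eq_mul_inv, lt_div_iff₀ h2] at h2'
  · rw [Int.floor_eq_iff] at hi
    obtain ⟨h1', h2'⟩ := hi
    constructor
    · rwa [← div_eq_mul_inv, div_le_iff₀ h2]
    · rwa [← div_eq_mul_inv, lt_div_iff₀ h2]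

lemma dyCube_measurable {d n : ℕ} {v : Fin d → ℤ} : MeasurableSet (dyCube d n v) := by
  have : dyCube d n v = ⋂ i, (fun x : Ed d => x i) ⁻¹'
      (Set.Ico ((v i : ℝ) * ((2:ℝ) ^ n)⁻¹) (((v i : ℝ) + 1) * ((2:ℝ) ^ n)⁻¹)) := by
    ext x; simp [dyCube, Set.mem_iInter]
  rw [this]
  exact MeasurableSet.iInter fun i => (by fun_prop : Continuous fun x : Ed d => x i).measurable measurableSet_Ico

lemma dyCube_disjoint {d n : ℕ} {v w : Fin d → ℤ} (hvw : v ≠ w) :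
    Disjoint (dyCube d n v) (dyCube d n w) := by
  rw [Set.disjoint_left]
  intro x hx hx'
  rw [mem_dyCube] at hx hx'
  exact hvw (funext fun i => (hx i).symm.trans (hx' i))

lemma dyCube_dist {d m : ℕ} {w : Fin d → ℤ} {x y : Ed d}
    (hx : x ∈ dyCube d m w) (hy : y ∈ dyCube d m w) :
    dist x y ≤ Real.sqrt d * ((2:ℝ) ^ m)⁻¹ := by
  have hΔ : (0:ℝ) ≤ ((2:ℝ) ^ m)⁻¹ := by positivity
  rw [EuclideanSpace.dist_eq]
  have key : ∑ i : Fin d, dist (x i) (y i) ^ 2 ≤ d * (((2:ℝ) ^ m)⁻¹)^2 := by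
    calc ∑ i : Fin d, dist (x i) (y i) ^ 2 ≤ ∑ i : Fin d, (((2:ℝ) ^ m)⁻¹)^2 := by
          apply Finset.sum_le_sum
          intro i _
          have hxi := hx i; have hyi := hy i
          have : |x i - y i| ≤ ((2:ℝ) ^ m)⁻¹ := by
            rw [abs_sub_le_iff]
            constructor <;> nlinarith [hxi.1, hxi.2, hyi.1, hyi.2]
          have h0 : dist (x i) (y i) = |x i - y i| := Real.dist_eq _ _
          rw [h0]
          nlinarith [abs_nonneg (x i - y i)]
      _ = d * (((2:ℝ) ^ m)⁻¹)^2 := by simp [Finset.sum_const, Finset.card_univ]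
  calc Real.sqrt (∑ i : Fin d, dist (x i) (y i) ^ 2)
      ≤ Real.sqrt (d * (((2:ℝ) ^ m)⁻¹)^2) := Real.sqrt_le_sqrt key
    _ = Real.sqrt d * ((2:ℝ) ^ m)⁻¹ := by
        rw [Real.sqrt_mul (by positivity), Real.sqrt_sq hΔ]

lemma energy_lb (d : ℕ) (hd : 1 ≤ d) (s : ℝ) (hs0 : 0 < s) (hsd : s ≤ d)
    (ψ : Ed d → ℝ) (hmono : ∀ x y : Ed d, ‖x‖ ≤ ‖y‖ → ψ y ≤ ψ x)
    (hone : ∀ x : Ed d, ‖x‖ ≤ 1/2 → 1 ≤ ψ x) (hle : ∀ x : Ed d, ψ x ≤ 1)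
    (hnn : ∀ x : Ed d, 0 ≤ ψ x)
    (δ : ℝ) (hδ : 0 < δ) (μ : Measure (Ed d)) [IsProbabilityMeasure μ] :
    (volume (ball (0:Ed d) 1))^2 * ENNReal.ofReal (((2:ℝ)^(3*d))⁻¹) *
      ∫⁻ a, ∫⁻ b, ENNReal.ofReal ((max (dist a b) δ) ^ (-s)) ∂μ ∂μ ≤ mollE d ψ s δ μ := by
  classical
  have hδd : (0:ℝ) < δ ^ d := by positivity
  set g : Ed d → Ed d → ℝ≥0∞ :=
    fun x a => ENNReal.ofReal ((δ ^ d)⁻¹ * ψ (δ⁻¹ • (x - a))) with hgdef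
  have ψm : Measurable ψ := psi_measurable hd ψ hmono
  have gm : Measurable (fun p : Ed d × Ed d => g p.1 p.2) := by
    apply Measurable.ennreal_ofReal
    exact (ψm.comp ((continuous_fst.sub continuous_snd).const_smul δ⁻¹).measurable).const_mul _
  have gm1 : ∀ x : Ed d, Measurable (fun a => g x a) :=
    fun x => gm.comp (measurable_const.prodMk measurable_id)
  -- mollified density as a lower integral
  have hmoll : ∀ x, ENNReal.ofReal (mollify d ψ δ μ x) = ∫⁻ a, g x a ∂μ := by
    intro x
    have hmeas : Measurable (fun a : Ed d => (δ ^ d)⁻¹ * ψ (δ⁻¹ • (x - a))) :=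
      (ψm.comp ((continuous_const.sub continuous_id).const_smul δ⁻¹).measurable).const_mul _
    have hint : Integrable (fun a : Ed d => (δ ^ d)⁻¹ * ψ (δ⁻¹ • (x - a))) μ := by
      apply (integrable_const ((δ ^ d)⁻¹)).mono' hmeas.aestronglyMeasurable
      refine Filter.Eventually.of_forall fun a => ?_
      rw [Real.norm_eq_abs, abs_of_nonneg (mul_nonneg (by positivity) (hnn _))]
      calc (δ ^ d)⁻¹ * ψ (δ⁻¹ • (x - a)) ≤ (δ ^ d)⁻¹ * 1 := by
            exact mul_le_mul_of_nonneg_left (hle _) (by positivity)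
        _ = (δ ^ d)⁻¹ := mul_one _
    exact ofReal_integral_eq_lintegral_ofReal hint
      (Filter.Eventually.of_forall fun a => mul_nonneg (by positivity) (hnn _))
  set F : (Ed d × Ed d) → (Ed d × Ed d) → ℝ≥0∞ :=
    fun z w => edist z.1 z.2 ^ (-s) * g z.1 w.1 * g z.2 w.2 with hF
  have Fm : Measurable (Function.uncurry F) := by
    have h1 : Measurable fun q : (Ed d × Ed d) × Ed d × Ed d => edist q.1.1 q.1.2 ^ (-s) :=
      (measurable_edist.comp (measurable_fst.fst.prodMk measurable_fst.snd)).pow_const _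
    have h2 : Measurable fun q : (Ed d × Ed d) × Ed d × Ed d => g q.1.1 q.2.1 :=
      gm.comp (measurable_fst.fst.prodMk measurable_snd.fst)
    have h3 : Measurable fun q : (Ed d × Ed d) × Ed d × Ed d => g q.1.2 q.2.2 :=
      gm.comp (measurable_fst.snd.prodMk measurable_snd.snd)
    exact (h1.mul h2).mul h3
  have hFz : Measurable fun z => ∫⁻ w, F z w ∂(μ.prod μ) := Measurable.lintegral_prod_right (f := F) Fm
  -- Step 1: rewrite the energy as a double-double integral and swap
  have step1 : mollE d ψ s δ μ = ∫⁻ w, ∫⁻ z, F z w ∂(volume.prod volume) ∂(μ.prod μ) := by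
    have e1 : mollE d ψ s δ μ
        = ∫⁻ x, ∫⁻ y, ∫⁻ w, F (x, y) w ∂(μ.prod μ) ∂volume ∂volume := by
      rw [mollE]
      refine lintegral_congr fun x => lintegral_congr fun y => ?_
      rw [hmoll x, hmoll y,
        lintegral_prod (fun w => F (x, y) w) ((Fm.comp measurable_prodMk_left).aemeasurable)]
      have e2 : ∀ a, ∫⁻ b, F (x, y) (a, b) ∂μ
          = edist x y ^ (-s) * (∫⁻ b, g y b ∂μ) * g x a := by
        intro a
        have : ∀ b, F (x, y) (a, b) = edist x y ^ (-s) * g x a * g y b := fun b => rfl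
        simp only [this]
        rw [lintegral_const_mul _ (gm1 y)]
        ring
      simp only [e2]
      rw [lintegral_const_mul _ (gm1 x)]
      ring
    rw [e1, ← lintegral_prod _ hFz.aemeasurable, lintegral_lintegral_swap Fm.aemeasurable]
  -- Step 2: pointwise lower bound for the inner integral
  have key : ∀ w : Ed d × Ed d,
      (volume (ball (0:Ed d) 1))^2 * ENNReal.ofReal (((2:ℝ)^(3*d))⁻¹) *
        ENNReal.ofReal ((max (dist w.1 w.2) δ) ^ (-s))
      ≤ ∫⁻ z, F z w ∂(volume.prod volume) := by
    rintro ⟨a, b⟩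
    have hFw : Measurable fun z : Ed d × Ed d => F z (a, b) := by
      have h1 : Measurable fun z : Ed d × Ed d => edist z.1 z.2 ^ (-s) :=
        measurable_edist.pow_const _
      have h2 : Measurable fun z : Ed d × Ed d => g z.1 a :=
        gm.comp (f := fun z : Ed d × Ed d => (z.1, a)) (measurable_fst.prodMk measurable_const)
      have h3 : Measurable fun z : Ed d × Ed d => g z.2 b :=
        gm.comp (f := fun z : Ed d × Ed d => (z.2, b)) (measurable_snd.prodMk measurable_const)
      exact (h1.mul h2).mul h3
    rw [lintegral_prod (fun z => F z (a, b)) hFw.aemeasurable]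
    set L : ℝ≥0∞ := ENNReal.ofReal ((dist a b + δ) ^ (-s) * ((δ ^ d)⁻¹ * (δ ^ d)⁻¹)) with hL
    have hdab : (0:ℝ) < dist a b + δ := by
      have := dist_nonneg (x := a) (y := b); linarith
    -- pointwise bound on the product of balls
    have hpt : ∀ x ∈ ball a (δ/2), ∀ y ∈ ball b (δ/2), L ≤ F (x, y) (a, b) := by
      intro x hx y hy
      rw [mem_ball] at hx hy
      have hg1 : ENNReal.ofReal ((δ ^ d)⁻¹) ≤ g x a := by
        apply ENNReal.ofReal_le_ofReal
        have hψ1 : 1 ≤ ψ (δ⁻¹ • (x - a)) := by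
          apply hone
          rw [norm_smul, Real.norm_eq_abs, abs_of_nonneg (by positivity : (0:ℝ) ≤ δ⁻¹),
            ← dist_eq_norm]
          calc δ⁻¹ * dist x a ≤ δ⁻¹ * (δ/2) := by
                exact mul_le_mul_of_nonneg_left hx.le (by positivity)
            _ = 1/2 := by field_simp
        calc (δ ^ d)⁻¹ = (δ ^ d)⁻¹ * 1 := (mul_one _).symm
          _ ≤ (δ ^ d)⁻¹ * ψ (δ⁻¹ • (x - a)) :=
              mul_le_mul_of_nonneg_left hψ1 (by positivity)
      have hg2 : ENNReal.ofReal ((δ ^ d)⁻¹) ≤ g y b := by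
        apply ENNReal.ofReal_le_ofReal
        have hψ1 : 1 ≤ ψ (δ⁻¹ • (y - b)) := by
          apply hone
          rw [norm_smul, Real.norm_eq_abs, abs_of_nonneg (by positivity : (0:ℝ) ≤ δ⁻¹),
            ← dist_eq_norm]
          calc δ⁻¹ * dist y b ≤ δ⁻¹ * (δ/2) := by
                exact mul_le_mul_of_nonneg_left hy.le (by positivity)
            _ = 1/2 := by field_simp
        calc (δ ^ d)⁻¹ = (δ ^ d)⁻¹ * 1 := (mul_one _).symm
          _ ≤ (δ ^ d)⁻¹ * ψ (δ⁻¹ • (y - b)) :=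
              mul_le_mul_of_nonneg_left hψ1 (by positivity)
      have hk : ENNReal.ofReal ((dist a b + δ) ^ (-s)) ≤ edist x y ^ (-s) := by
        have hdxy : dist x y ≤ dist a b + δ := by
          have h4 := dist_triangle4 x a b y
          have hby : dist b y = dist y b := dist_comm b y
          rw [hby] at h4
          linarith [hx, hy, h4]
        have h1 : edist x y ^ s ≤ ENNReal.ofReal ((dist a b + δ) ^ s) := by
          rw [edist_dist, ENNReal.ofReal_rpow_of_nonneg dist_nonneg hs0.le]
          exact ENNReal.ofReal_le_ofReal (Real.rpow_le_rpow dist_nonneg hdxy hs0.le)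
        rw [ENNReal.rpow_neg, Real.rpow_neg hdab.le,
          ENNReal.ofReal_inv_of_pos (Real.rpow_pos_of_pos hdab s)]
        exact ENNReal.inv_le_inv.mpr h1
      have : L = ENNReal.ofReal ((dist a b + δ) ^ (-s)) *
          (ENNReal.ofReal ((δ ^ d)⁻¹) * ENNReal.ofReal ((δ ^ d)⁻¹)) := by
        rw [hL, ENNReal.ofReal_mul (by positivity), ENNReal.ofReal_mul (by positivity)]
      rw [this, ← mul_assoc]
      exact mul_le_mul' (mul_le_mul' hk hg1) hg2
    -- integrate the bound
    have hinner : ∀ x ∈ ball a (δ/2),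
        L * volume (ball b (δ/2)) ≤ ∫⁻ y, F (x, y) (a, b) ∂volume := by
      intro x hx
      have hFy : Measurable fun y : Ed d => F (x, y) (a, b) := by
        have h1 : Measurable fun y : Ed d => edist x y ^ (-s) :=
          (measurable_const.edist measurable_id).pow_const _
        have h2 : Measurable fun y : Ed d => g y b :=
          gm.comp (f := fun y : Ed d => (y, b)) (measurable_id.prodMk measurable_const)
        exact (h1.mul_const (g x a)).mul h2
      calc L * volume (ball b (δ/2)) = ∫⁻ _ in ball b (δ/2), L ∂volume :=
            (setLIntegral_const _ _).symm
        _ ≤ ∫⁻ y in ball b (δ/2), F (x, y) (a, b) ∂volume :=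
            setLIntegral_mono hFy (fun y hy => hpt x hx y hy)
        _ ≤ ∫⁻ y, F (x, y) (a, b) ∂volume := setLIntegral_le_lintegral _ _
    have houter : L * volume (ball b (δ/2)) * volume (ball a (δ/2))
        ≤ ∫⁻ x, ∫⁻ y, F (x, y) (a, b) ∂volume ∂volume := by
      have hFx : Measurable fun x : Ed d => ∫⁻ y, F (x, y) (a, b) ∂volume := by
        apply Measurable.lintegral_prod_right (f := fun x y => F (x, y) (a, b))
        have h1 : Measurable fun p : Ed d × Ed d => edist p.1 p.2 ^ (-s) :=
          measurable_edist.pow_const _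
        have h2 : Measurable fun p : Ed d × Ed d => g p.1 a :=
          gm.comp (f := fun z : Ed d × Ed d => (z.1, a)) (measurable_fst.prodMk measurable_const)
        have h3 : Measurable fun p : Ed d × Ed d => g p.2 b :=
          gm.comp (f := fun z : Ed d × Ed d => (z.2, b)) (measurable_snd.prodMk measurable_const)
        exact (h1.mul h2).mul h3
      calc L * volume (ball b (δ/2)) * volume (ball a (δ/2))
          = ∫⁻ _ in ball a (δ/2), L * volume (ball b (δ/2)) ∂volume :=
            (setLIntegral_const _ _).symm
        _ ≤ ∫⁻ x in ball a (δ/2), ∫⁻ y, F (x, y) (a, b) ∂volume ∂volume :=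
            setLIntegral_mono hFx hinner
        _ ≤ ∫⁻ x, ∫⁻ y, F (x, y) (a, b) ∂volume ∂volume := setLIntegral_le_lintegral _ _
    refine le_trans ?_ houter
    -- compute the volumes and conclude by a real inequality
    haveI : Nonempty (Fin d) := ⟨⟨0, hd⟩⟩
    haveI : Nontrivial (Ed d) := ⟨⟨0, EuclideanSpace.single ⟨0, hd⟩ 1,
      fun h => by simpa using congrArg (fun v : Ed d => v ⟨0, hd⟩) h⟩⟩
    have hvol : ∀ c : Ed d, volume (ball c (δ/2))
        = ENNReal.ofReal ((δ/2) ^ d) * volume (ball (0:Ed d) 1) := by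
      intro c
      rw [Measure.addHaar_ball volume c (by positivity : (0:ℝ) ≤ δ/2)]
      rw [show Module.finrank ℝ (Ed d) = d from finrank_euclideanSpace_fin]
    rw [hvol, hvol]
    have hreal : ((2:ℝ)^(3*d))⁻¹ * (max (dist a b) δ) ^ (-s)
        ≤ (dist a b + δ) ^ (-s) * ((δ ^ d)⁻¹ * (δ ^ d)⁻¹) * ((δ/2) ^ d * (δ/2) ^ d) := by
      have hmaxpos : (0:ℝ) < max (dist a b) δ := lt_of_lt_of_le hδ (le_max_right _ _)
      have h2M : dist a b + δ ≤ 2 * max (dist a b) δ := by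
        rw [two_mul]
        exact add_le_add (le_max_left _ _) (le_max_right _ _)
      have hks : (2 * max (dist a b) δ) ^ (-s) ≤ (dist a b + δ) ^ (-s) := by
        rw [Real.rpow_neg (by positivity), Real.rpow_neg hdab.le]
        apply inv_anti₀ (Real.rpow_pos_of_pos hdab s)
        exact Real.rpow_le_rpow hdab.le h2M hs0.le
      have hsplit : (2 * max (dist a b) δ) ^ (-s)
          = (2:ℝ) ^ (-s) * (max (dist a b) δ) ^ (-s) :=
        Real.mul_rpow (by norm_num) hmaxpos.le
      have h2s : ((2:ℝ)^d)⁻¹ ≤ (2:ℝ) ^ (-s) := by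
        rw [Real.rpow_neg (by norm_num)]
        apply inv_anti₀ (by positivity)
        calc (2:ℝ) ^ s ≤ (2:ℝ) ^ (d:ℝ) :=
              Real.rpow_le_rpow_of_exponent_le one_le_two hsd
          _ = (2:ℝ) ^ d := Real.rpow_natCast 2 d
      have hnorm2 : (δ ^ d)⁻¹ * (δ/2) ^ d = ((2:ℝ)^d)⁻¹ := by
        rw [div_pow]
        field_simp
      calc ((2:ℝ)^(3*d))⁻¹ * (max (dist a b) δ) ^ (-s)
          = ((2:ℝ)^d)⁻¹ * (max (dist a b) δ) ^ (-s) * (((2:ℝ)^d)⁻¹ * ((2:ℝ)^d)⁻¹) := by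
            rw [show 3*d = d + (d + d) by ring, pow_add, pow_add, mul_inv, mul_inv]
            ring
        _ ≤ (2:ℝ) ^ (-s) * (max (dist a b) δ) ^ (-s) * (((2:ℝ)^d)⁻¹ * ((2:ℝ)^d)⁻¹) := by
            apply mul_le_mul_of_nonneg_right
              (mul_le_mul_of_nonneg_right h2s (Real.rpow_nonneg hmaxpos.le _))
            positivity
        _ = (2 * max (dist a b) δ) ^ (-s) * (((2:ℝ)^d)⁻¹ * ((2:ℝ)^d)⁻¹) := by rw [hsplit]
        _ ≤ (dist a b + δ) ^ (-s) * (((2:ℝ)^d)⁻¹ * ((2:ℝ)^d)⁻¹) := by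
            apply mul_le_mul_of_nonneg_right hks (by positivity)
        _ = (dist a b + δ) ^ (-s) * ((δ ^ d)⁻¹ * (δ ^ d)⁻¹) * ((δ/2) ^ d * (δ/2) ^ d) := by
            rw [← hnorm2]
            ring
    calc (volume (ball (0:Ed d) 1))^2 * ENNReal.ofReal (((2:ℝ)^(3*d))⁻¹) *
          ENNReal.ofReal ((max (dist a b) δ) ^ (-s))
        = (volume (ball (0:Ed d) 1))^2 *
            ENNReal.ofReal (((2:ℝ)^(3*d))⁻¹ * (max (dist a b) δ) ^ (-s)) := by
          rw [ENNReal.ofReal_mul (by positivity), mul_assoc]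
      _ ≤ (volume (ball (0:Ed d) 1))^2 *
            ENNReal.ofReal ((dist a b + δ) ^ (-s) * ((δ ^ d)⁻¹ * (δ ^ d)⁻¹) *
              ((δ/2) ^ d * (δ/2) ^ d)) :=
          mul_le_mul_right (ENNReal.ofReal_le_ofReal hreal) _
      _ = L * (ENNReal.ofReal ((δ/2) ^ d) * volume (ball (0:Ed d) 1)) *
            (ENNReal.ofReal ((δ/2) ^ d) * volume (ball (0:Ed d) 1)) := by
          rw [hL, ENNReal.ofReal_mul (by positivity),
            ENNReal.ofReal_mul (by positivity : (0:ℝ) ≤ (δ/2)^d)]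
          rw [sq]
          ring
  -- Step 3: conclude
  rw [step1]
  have hkkm : Measurable fun w : Ed d × Ed d =>
      ENNReal.ofReal ((max (dist w.1 w.2) δ) ^ (-s)) :=
    (((continuous_dist.max continuous_const).rpow_const
      (fun w => Or.inl (by
        have : (0:ℝ) < max (dist w.1 w.2) δ := lt_of_lt_of_le hδ (le_max_right _ _)
        exact this.ne'))).measurable).ennreal_ofReal
  calc (volume (ball (0:Ed d) 1))^2 * ENNReal.ofReal (((2:ℝ)^(3*d))⁻¹) *
        ∫⁻ a, ∫⁻ b, ENNReal.ofReal ((max (dist a b) δ) ^ (-s)) ∂μ ∂μ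
      = ∫⁻ w : Ed d × Ed d, (volume (ball (0:Ed d) 1))^2 * ENNReal.ofReal (((2:ℝ)^(3*d))⁻¹) *
          ENNReal.ofReal ((max (dist w.1 w.2) δ) ^ (-s)) ∂(μ.prod μ) := by
        rw [← lintegral_prod (fun w : Ed d × Ed d =>
            ENNReal.ofReal ((max (dist w.1 w.2) δ) ^ (-s))) hkkm.aemeasurable,
          lintegral_const_mul _ hkkm]
    _ ≤ ∫⁻ w, ∫⁻ z, F z w ∂(volume.prod volume) ∂(μ.prod μ) := lintegral_mono key

/-- Let `ε ∈ (0,1)`, `C, d ≥ 1`, `s ∈ (0,d)`. For all sufficiently small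
dyadic `δ = 2⁻ⁿ`: if `μ` is a Borel probability measure on `ℝ^d` with `I_s^δ(μ) ≤ C` and
`K ⊂ B(1)` is Borel with `μ(K) ≥ δ^ε`, then there is a nonempty family `𝒫` of dyadic
`δ`-cubes meeting `K` which is a `(δ,s,C')`-set with `C' ≤ O_d(C δ^{-3ε})`, i.e.
`|𝒫 ∩ Q| ≤ C' Δ^s |𝒫|` for every dyadic cube `Q` of side-length `Δ ∈ [δ,1]`. -/
theorem statement9 (ε : ℝ) (hε : ε ∈ Set.Ioo (0:ℝ) 1) (C : ℝ) (hC : 1 ≤ C)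
    (d : ℕ) (hd : 1 ≤ d) (s : ℝ) (hs : s ∈ Set.Ioo (0:ℝ) (d:ℝ))
    (ψ : Ed d → ℝ) (hψ : IsApproxId d ψ) :
    ∃ A : ℝ, 0 < A ∧ ∃ n₀ : ℕ, ∀ n : ℕ, n₀ ≤ n →
      ∀ μ : Measure (Ed d), IsProbabilityMeasure μ →
        mollE d ψ s (((2:ℝ) ^ n)⁻¹) μ ≤ ENNReal.ofReal C →
      ∀ K : Set (Ed d), K ⊆ closedBall (0 : Ed d) 1 → MeasurableSet K →
        ENNReal.ofReal ((((2:ℝ) ^ n)⁻¹) ^ ε) ≤ μ K →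
      ∃ Pf : Finset (Fin d → ℤ), Pf.Nonempty ∧
        (∀ v ∈ Pf, (dyCube d n v ∩ K).Nonempty) ∧
        (∀ m : ℕ, m ≤ n → ∀ w : Fin d → ℤ,
          (Nat.card {v : Fin d → ℤ // v ∈ Pf ∧ dyCube d n v ⊆ dyCube d m w} : ℝ)
            ≤ (A * C * (((2:ℝ) ^ n)⁻¹) ^ (-3 * ε)) * (((2:ℝ) ^ m)⁻¹) ^ s * (Pf.card : ℝ)) := by
  classical
  obtain ⟨hε0, hε1⟩ := hε
  obtain ⟨hs0, hsd⟩ := hs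
  obtain ⟨hmono, hint1, hone, hle, hnn, hsupp⟩ := hψ
  have hC0 : (0:ℝ) ≤ C := le_trans zero_le_one hC
  set B : ℝ := (volume (ball (0:Ed d) 1)).toReal with hBdef
  have hBpos : 0 < B :=
    ENNReal.toReal_pos (measure_ball_pos volume 0 one_pos).ne' measure_ball_lt_top.ne
  set A : ℝ := 2^(3*d) * (B⁻¹)^2 * (d:ℝ)^((d:ℝ)/2) with hAdef
  have hApos : 0 < A := by
    have : (0:ℝ) < (d:ℝ)^((d:ℝ)/2) :=
      Real.rpow_pos_of_pos (by exact_mod_cast Nat.lt_of_lt_of_le Nat.zero_lt_one hd) _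
    positivity
  refine ⟨A, hApos, ?_⟩
  set κ : ℝ := (ε * Real.log 2 / 2)^2 with hκdef
  have hκpos : 0 < κ := by
    have := Real.log_pos one_lt_two
    positivity
  refine ⟨max 2 ⌈64*((d:ℝ)+1)/κ⌉₊, ?_⟩
  intro n hn μ hμ hE K hKball hKmeas hμK
  have hn2 : 2 ≤ n := le_trans (le_max_left _ _) hn
  set δ : ℝ := ((2:ℝ)^n)⁻¹ with hδdef
  have hδpos : 0 < δ := by positivity
  have hδle1 : δ ≤ 1 := by
    rw [hδdef]
    rw [inv_le_one_iff₀]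
    right
    exact one_le_pow₀ one_le_two
  have hδεle1 : δ^ε ≤ 1 := Real.rpow_le_one hδpos.le hδle1 hε0.le
  have hδεpos : 0 < δ^ε := Real.rpow_pos_of_pos hδpos ε
  set σ : ℝ≥0∞ := ENNReal.ofReal (δ^ε) with hσdef
  have hσ0 : σ ≠ 0 := (ENNReal.ofReal_pos.mpr hδεpos).ne'
  have hσtop : σ ≠ ∞ := ENNReal.ofReal_ne_top
  -- the key real inequality provided by the choice of n₀
  have hMreal : (32:ℝ) * ((n+2)*((d:ℝ)+1)) ≤ (δ^ε)⁻¹ := by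
    have hceil : (64*((d:ℝ)+1)/κ) ≤ n := by
      have h1 : ⌈64*((d:ℝ)+1)/κ⌉₊ ≤ n := le_trans (le_max_right _ _) hn
      exact Nat.ceil_le.mp h1
    have hκn : 64*((d:ℝ)+1) ≤ n * κ := by
      rw [div_le_iff₀ hκpos] at hceil
      linarith
    have hinv : (δ^ε)⁻¹ = (2:ℝ)^((n:ℝ)*ε) := by
      have hδ2 : δ = (2:ℝ) ^ (-(n:ℝ)) := by
        rw [hδdef, ← Real.rpow_natCast 2 n, ← Real.rpow_neg (by norm_num : (0:ℝ) ≤ 2)]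
      rw [hδ2, ← Real.rpow_mul (by norm_num : (0:ℝ) ≤ 2),
        ← Real.rpow_neg (by norm_num : (0:ℝ) ≤ 2)]
      congr 1
      ring
    rw [hinv]
    have hexp : (n:ℝ)^2 * κ ≤ (2:ℝ)^((n:ℝ)*ε) := by
      rw [Real.rpow_def_of_pos (by norm_num)]
      set t : ℝ := Real.log 2 * ((n:ℝ)*ε) with htdef
      have ht0 : 0 ≤ t := by
        have := (Real.log_pos one_lt_two).le
        positivity
      have h1 : t/2 ≤ Real.exp (t/2) := by linarith [Real.add_one_le_exp (t/2)]
      have h2 : (t/2)^2 ≤ Real.exp (t/2)^2 := by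
        apply pow_le_pow_left₀ (by positivity) h1
      have h3 : Real.exp (t/2)^2 = Real.exp t := by
        rw [sq, ← Real.exp_add, add_halves]
      have h4 : (t/2)^2 = (n:ℝ)^2 * κ := by
        rw [htdef, hκdef]
        ring
      rw [← h3, ← h4]
      exact h2
    have hn0 : (0:ℝ) ≤ n := Nat.cast_nonneg n
    have hn2' : (2:ℝ) ≤ n := by exact_mod_cast hn2
    nlinarith [mul_le_mul_of_nonneg_left hκn hn0]
  -- potential-theoretic setup
  set c : ℝ≥0∞ := (volume (ball (0:Ed d) 1))^2 * ENNReal.ofReal (((2:ℝ)^(3*d))⁻¹) with hcdef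
  have hvol_eq : volume (ball (0:Ed d) 1) = ENNReal.ofReal B :=
    (ENNReal.ofReal_toReal measure_ball_lt_top.ne).symm
  have hc_eq : c = ENNReal.ofReal (B^2 * ((2:ℝ)^(3*d))⁻¹) := by
    rw [hcdef, hvol_eq, ENNReal.ofReal_mul (by positivity), ← ENNReal.ofReal_pow hBpos.le]
  have hcreal_pos : (0:ℝ) < B^2 * ((2:ℝ)^(3*d))⁻¹ := by positivity
  have hc0 : c ≠ 0 := by rw [hc_eq]; exact (ENNReal.ofReal_pos.mpr hcreal_pos).ne'
  have hctop : c ≠ ∞ := by rw [hc_eq]; exact ENNReal.ofReal_ne_top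
  set UU : Ed d → ℝ≥0∞ :=
    fun x => ∫⁻ y, ENNReal.ofReal ((max (dist x y) δ) ^ (-s)) ∂μ with hUUdef
  have hkkm : Measurable fun w : Ed d × Ed d =>
      ENNReal.ofReal ((max (dist w.1 w.2) δ) ^ (-s)) :=
    (((continuous_dist.max continuous_const).rpow_const
      (fun w => Or.inl (lt_of_lt_of_le hδpos (le_max_right _ _)).ne')).measurable).ennreal_ofReal
  have hUUm : Measurable UU :=
    Measurable.lintegral_prod_right
      (f := fun x y => ENNReal.ofReal ((max (dist x y) δ) ^ (-s))) hkkm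
  have hEE : c * ∫⁻ x, UU x ∂μ ≤ ENNReal.ofReal C :=
    le_trans (energy_lb d hd s hs0 hsd.le ψ hmono hone hle hnn δ hδpos μ) hE
  set E₀ : ℝ≥0∞ := c⁻¹ * ENNReal.ofReal C with hE₀def
  have hofC1 : (1:ℝ≥0∞) ≤ ENNReal.ofReal C := by
    rw [← ENNReal.ofReal_one]
    exact ENNReal.ofReal_le_ofReal hC
  have hE₀0 : E₀ ≠ 0 := by
    apply mul_ne_zero (ENNReal.inv_ne_zero.mpr hctop)
    exact (lt_of_lt_of_le zero_lt_one hofC1).ne'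
  have hE₀top : E₀ ≠ ∞ :=
    ENNReal.mul_ne_top (ENNReal.inv_ne_top.mpr hc0) ENNReal.ofReal_ne_top
  have hEE' : ∫⁻ x, UU x ∂μ ≤ E₀ := by
    calc ∫⁻ x, UU x ∂μ = c⁻¹ * (c * ∫⁻ x, UU x ∂μ) := by
          rw [← mul_assoc, ENNReal.inv_mul_cancel hc0 hctop, one_mul]
      _ ≤ c⁻¹ * ENNReal.ofReal C := mul_le_mul_right hEE _
  set T : ℝ≥0∞ := 2 * E₀ * σ⁻¹ with hTdef
  set Good : Set (Ed d) := {x | UU x < T} with hGooddef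
  have hGoodm : MeasurableSet Good := measurableSet_lt hUUm measurable_const
  have hcheb : μ {x | T ≤ UU x} ≤ σ * 2⁻¹ := by
    have h := mul_meas_ge_le_lintegral₀ (μ := μ) hUUm.aemeasurable T
    have h2 : T * μ {x | T ≤ UU x} ≤ E₀ := le_trans h hEE'
    have hids : σ * σ⁻¹ = 1 := ENNReal.mul_inv_cancel hσ0 hσtop
    have hidE : E₀⁻¹ * E₀ = 1 := ENNReal.inv_mul_cancel hE₀0 hE₀top
    have hid2 : (2:ℝ≥0∞)⁻¹ * 2 = 1 := ENNReal.inv_mul_cancel (by norm_num) (by norm_num)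
    calc μ {x | T ≤ UU x}
        = σ * 2⁻¹ * E₀⁻¹ * (T * μ {x | T ≤ UU x}) := by
          rw [hTdef]
          calc μ {x | T ≤ UU x} = (σ * σ⁻¹) * (E₀⁻¹ * E₀) * ((2:ℝ≥0∞)⁻¹ * 2) *
              μ {x | T ≤ UU x} := by rw [hids, hidE, hid2]; ring
            _ = σ * 2⁻¹ * E₀⁻¹ * (2 * E₀ * σ⁻¹ * μ {x | T ≤ UU x}) := by ring
      _ ≤ σ * 2⁻¹ * E₀⁻¹ * E₀ := mul_le_mul_right h2 _
      _ = σ * 2⁻¹ * (E₀⁻¹ * E₀) := by ring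
      _ = σ * 2⁻¹ := by rw [hidE, mul_one]
  have hKG : σ * 2⁻¹ ≤ μ (K ∩ Good) := by
    have hsplit : μ (K ∩ Good) + μ (K \ Good) = μ K := measure_inter_add_diff K hGoodm
    have hKBad : μ (K \ Good) ≤ σ * 2⁻¹ := by
      apply le_trans (measure_mono ?_) hcheb
      intro x hx
      have : ¬ (UU x < T) := hx.2
      exact not_lt.mp this
    have h1 : σ ≤ μ (K ∩ Good) + σ * 2⁻¹ := by
      calc σ ≤ μ K := hμK
        _ = μ (K ∩ Good) + μ (K \ Good) := hsplit.symm
        _ ≤ μ (K ∩ Good) + σ * 2⁻¹ := add_le_add_right hKBad _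
    have hσhalf : σ = σ * 2⁻¹ + σ * 2⁻¹ := by
      rw [← mul_add, ENNReal.inv_two_add_inv_two, mul_one]
    have h2 : σ * 2⁻¹ + σ * 2⁻¹ ≤ σ * 2⁻¹ + μ (K ∩ Good) := by
      calc σ * 2⁻¹ + σ * 2⁻¹ = σ := hσhalf.symm
        _ ≤ μ (K ∩ Good) + σ * 2⁻¹ := h1
        _ = σ * 2⁻¹ + μ (K ∩ Good) := add_comm _ _
    exact (ENNReal.add_le_add_iff_left (by
      exact ENNReal.mul_ne_top hσtop (by norm_num))).mp h2
  -- masses of dyadic cubes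
  set mas : (Fin d → ℤ) → ℝ≥0∞ := fun v => μ (dyCube d n v ∩ K ∩ Good) with hmasdef
  have hmas_meas : ∀ v, MeasurableSet (dyCube d n v ∩ K ∩ Good) :=
    fun v => (dyCube_measurable.inter hKmeas).inter hGoodm
  have hmas1 : ∀ v, mas v ≤ 1 := fun v => prob_le_one
  set V : Finset (Fin d → ℤ) :=
    Fintype.piFinset (fun _ : Fin d => Finset.Icc (-(2^n : ℤ)) ((2^n : ℤ))) with hVdef
  have hcover : μ (K ∩ Good) ≤ ∑ v ∈ V, mas v := by
    have hsub : K ∩ Good ⊆ ⋃ v ∈ V, (dyCube d n v ∩ K ∩ Good) := by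
      intro x hx
      have hxK : x ∈ K := hx.1
      have hxB := hKball hxK
      rw [mem_closedBall, dist_zero_right] at hxB
      set v : Fin d → ℤ := fun i => ⌊x i * 2^n⌋ with hvdef
      have hxv : x ∈ dyCube d n v := mem_dyCube.mpr (fun i => rfl)
      have hvV : v ∈ V := by
        rw [hVdef, Fintype.mem_piFinset]
        intro i
        rw [Finset.mem_Icc]
        have hxi : |x i| ≤ 1 := by
          have h1 : |x i| ≤ ‖x‖ := by
            rw [EuclideanSpace.norm_eq]
            have h2 : (x i)^2 ≤ ∑ j, ‖x j‖^2 := by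
              have := Finset.single_le_sum (f := fun j => ‖x j‖^2)
                (fun j _ => by positivity) (Finset.mem_univ i)
              simpa [Real.norm_eq_abs, sq_abs] using this
            calc |x i| = Real.sqrt ((x i)^2) := (Real.sqrt_sq_eq_abs _).symm
              _ ≤ _ := Real.sqrt_le_sqrt h2
          exact le_trans h1 hxB
        rw [abs_le] at hxi
        have hlo : -(2^n : ℤ) ≤ ⌊x i * (2:ℝ)^n⌋ := by
          apply Int.le_floor.mpr
          push_cast
          nlinarith [hxi.1, pow_pos (by norm_num : (0:ℝ) < 2) n]
        have hup : ⌊x i * (2:ℝ)^n⌋ ≤ (2^n : ℤ) := by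
          calc ⌊x i * (2:ℝ)^n⌋ ≤ ⌊(((2^n : ℤ) : ℤ) : ℝ)⌋ := by
                apply Int.floor_le_floor
                push_cast
                nlinarith [hxi.2, pow_pos (by norm_num : (0:ℝ) < 2) n]
            _ = (2^n : ℤ) := Int.floor_intCast _
        exact ⟨hlo, hup⟩
      exact Set.mem_biUnion hvV ⟨⟨hxv, hxK⟩, hx.2⟩
    exact le_trans (measure_mono hsub) (measure_biUnion_finset_le V _)
  have hVcard : (V.card : ℝ≥0∞) ≤ 2^((n+2)*d) := by
    have h1 : V.card = (2^(n+1) + 1)^d := by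
      rw [hVdef, Fintype.card_piFinset]
      have h2 : ∀ i : Fin d, (Finset.Icc (-(2^n : ℤ)) ((2^n : ℤ))).card = 2^(n+1) + 1 := by
        intro i
        rw [Int.card_Icc]
        have : ((2:ℤ)^n + 1 - -(2^n)) = ((2^(n+1) + 1 : ℕ) : ℤ) := by push_cast; ring
        rw [this, Int.toNat_natCast]
      rw [Finset.prod_congr rfl (fun i _ => h2 i), Finset.prod_const, Finset.card_univ,
        Fintype.card_fin]
    have h3 : V.card ≤ 2^((n+2)*d) := by
      rw [h1]
      calc (2^(n+1) + 1)^d ≤ (2^(n+2))^d := by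
            apply Nat.pow_le_pow_left
            have : 1 ≤ 2^(n+1) := Nat.one_le_two_pow
            calc 2^(n+1) + 1 ≤ 2^(n+1) + 2^(n+1) := by omega
              _ = 2^(n+2) := by ring
        _ = 2^((n+2)*d) := by rw [← pow_mul, Nat.mul_comm]
    calc (V.card : ℝ≥0∞) ≤ ((2^((n+2)*d) : ℕ) : ℝ≥0∞) := by exact_mod_cast h3
      _ = 2^((n+2)*d) := by push_cast; ring
  set M : ℕ := (n+2)*(d+1) with hMdef
  have hM0 : M ≠ 0 := by positivity
  have hMtop : ((M:ℝ≥0∞)) ≠ ∞ := ENNReal.natCast_ne_top M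
  have hMcast0 : (M:ℝ≥0∞) ≠ 0 := Nat.cast_ne_zero.mpr hM0
  have hhalfn : ((2:ℝ≥0∞)⁻¹)^n = ENNReal.ofReal δ := by
    rw [hδdef, ENNReal.ofReal_inv_of_pos (by positivity), ENNReal.ofReal_pow (by norm_num)]
    rw [ENNReal.ofReal_ofNat, ENNReal.inv_pow]
  have hδσ : ENNReal.ofReal δ ≤ σ := by
    rw [hσdef]
    apply ENNReal.ofReal_le_ofReal
    calc δ = δ^(1:ℝ) := (Real.rpow_one δ).symm
      _ ≤ δ^ε := Real.rpow_le_rpow_of_exponent_ge hδpos hδle1 hε1.le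
  have hdiscard : ∑ v ∈ V.filter (fun v => mas v ≤ ((2:ℝ≥0∞)⁻¹)^M), mas v ≤ σ * 2⁻¹^2 := by
    calc ∑ v ∈ V.filter (fun v => mas v ≤ ((2:ℝ≥0∞)⁻¹)^M), mas v
        ≤ (V.filter (fun v => mas v ≤ ((2:ℝ≥0∞)⁻¹)^M)).card • ((2:ℝ≥0∞)⁻¹)^M :=
          Finset.sum_le_card_nsmul _ _ _ (fun v hv => (Finset.mem_filter.mp hv).2)
      _ = ((V.filter (fun v => mas v ≤ ((2:ℝ≥0∞)⁻¹)^M)).card : ℝ≥0∞) * ((2:ℝ≥0∞)⁻¹)^M := by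
          rw [nsmul_eq_mul]
      _ ≤ (V.card : ℝ≥0∞) * ((2:ℝ≥0∞)⁻¹)^M := by
          apply mul_le_mul_left
          exact_mod_cast Finset.card_filter_le _ _
      _ ≤ 2^((n+2)*d) * ((2:ℝ≥0∞)⁻¹)^M := mul_le_mul_left hVcard _
      _ = ((2:ℝ≥0∞)^((n+2)*d) * ((2:ℝ≥0∞)⁻¹)^((n+2)*d)) * (2⁻¹)^(n+2) := by
          rw [hMdef, show (n+2)*(d+1) = (n+2)*d + (n+2) by ring, pow_add]
          ring
      _ = (2⁻¹)^(n+2) := by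
          rw [← mul_pow, ENNReal.mul_inv_cancel (by norm_num) (by norm_num), one_pow, one_mul]
      _ = (2⁻¹)^n * 2⁻¹^2 := by rw [pow_add]
      _ ≤ σ * 2⁻¹^2 := mul_le_mul_left (le_trans (le_of_eq hhalfn) hδσ) _
  set Wf : Finset (Fin d → ℤ) := V.filter (fun v => ¬ mas v ≤ ((2:ℝ≥0∞)⁻¹)^M) with hWfdef
  have hWsum : σ * 2⁻¹^2 ≤ ∑ v ∈ Wf, mas v := by
    have hsplit := Finset.sum_filter_add_sum_filter_not V
      (fun v => mas v ≤ ((2:ℝ≥0∞)⁻¹)^M) mas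
    have h1 : σ * 2⁻¹ ≤ σ * 2⁻¹^2 + ∑ v ∈ Wf, mas v := by
      calc σ * 2⁻¹ ≤ μ (K ∩ Good) := hKG
        _ ≤ ∑ v ∈ V, mas v := hcover
        _ = ∑ v ∈ V.filter (fun v => mas v ≤ ((2:ℝ≥0∞)⁻¹)^M), mas v + ∑ v ∈ Wf, mas v :=
            hsplit.symm
        _ ≤ σ * 2⁻¹^2 + ∑ v ∈ Wf, mas v := add_le_add_left hdiscard _
    have hhalf : σ * 2⁻¹ = σ * 2⁻¹^2 + σ * 2⁻¹^2 := by
      rw [← mul_add]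
      congr 1
      rw [sq, ← mul_add, ENNReal.inv_two_add_inv_two, mul_one]
    rw [hhalf] at h1
    exact (ENNReal.add_le_add_iff_left
      (ENNReal.mul_ne_top hσtop (by norm_num))).mp h1
  set classFn : (Fin d → ℤ) → ℕ :=
    fun v => Nat.findGreatest (fun j => mas v ≤ ((2:ℝ≥0∞)⁻¹)^j) M with hclassdef
  have hclass : ∀ v ∈ Wf, classFn v < M ∧ mas v ≤ ((2:ℝ≥0∞)⁻¹)^(classFn v) ∧
      ((2:ℝ≥0∞)⁻¹)^(classFn v + 1) < mas v := by
    intro v hv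
    have hvW := (Finset.mem_filter.mp hv).2
    have hP0 : mas v ≤ ((2:ℝ≥0∞)⁻¹)^0 := by simpa using hmas1 v
    have hspec : mas v ≤ ((2:ℝ≥0∞)⁻¹)^(classFn v) :=
      Nat.findGreatest_spec (P := fun j => mas v ≤ ((2:ℝ≥0∞)⁻¹)^j) (Nat.zero_le M) hP0
    have hlt : classFn v < M := by
      rcases lt_or_eq_of_le (Nat.findGreatest_le (P := fun j => mas v ≤ ((2:ℝ≥0∞)⁻¹)^j) M)
        with h | h
      · exact h
      · exfalso; apply hvW; rw [← h]; exact hspec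
    refine ⟨hlt, hspec, ?_⟩
    have := Nat.findGreatest_is_greatest (P := fun j => mas v ≤ ((2:ℝ≥0∞)⁻¹)^j)
      (Nat.lt_succ_self (classFn v)) hlt
    exact not_le.mp this
  set q : ℝ≥0∞ := σ * 2⁻¹^3 * ((M:ℝ≥0∞))⁻¹ with hqdef
  have hq0 : q ≠ 0 := by
    apply mul_ne_zero (mul_ne_zero hσ0 (by norm_num))
    exact ENNReal.inv_ne_zero.mpr hMtop
  have hqtop : q ≠ ∞ := by
    apply ENNReal.mul_ne_top (ENNReal.mul_ne_top hσtop (by norm_num))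
    exact ENNReal.inv_ne_top.mpr hMcast0
  have hpig : ∃ j ∈ Finset.range M, q ≤ ∑ v ∈ Wf.filter (fun v => classFn v = j), mas v := by
    by_contra hcon
    push_neg at hcon
    have hfib : ∑ j ∈ Finset.range M, ∑ v ∈ Wf.filter (fun v => classFn v = j), mas v
        = ∑ v ∈ Wf, mas v :=
      Finset.sum_fiberwise_of_maps_to (fun v hv => Finset.mem_range.mpr (hclass v hv).1) _
    have h1 : ∑ v ∈ Wf, mas v ≤ M * q := by
      rw [← hfib]
      calc ∑ j ∈ Finset.range M, ∑ v ∈ Wf.filter (fun v => classFn v = j), mas v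
          ≤ (Finset.range M).card • q :=
            Finset.sum_le_card_nsmul _ _ _ (fun j hj => (hcon j hj).le)
        _ = M * q := by rw [nsmul_eq_mul, Finset.card_range]
    have h2 : (M:ℝ≥0∞) * q = σ * 2⁻¹^3 := by
      rw [hqdef]
      calc (M:ℝ≥0∞) * (σ * 2⁻¹^3 * ((M:ℝ≥0∞))⁻¹) = σ * 2⁻¹^3 * ((M:ℝ≥0∞) * (M:ℝ≥0∞)⁻¹) := by
            ring
        _ = σ * 2⁻¹^3 := by rw [ENNReal.mul_inv_cancel hMcast0 hMtop, mul_one]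
    have h3 : σ * 2⁻¹^2 ≤ σ * 2⁻¹^3 := le_trans hWsum (le_trans h1 (le_of_eq h2))
    have h4 : σ * 2⁻¹^3 < σ * 2⁻¹^2 := by
      have he : σ * 2⁻¹^3 = (σ * 2⁻¹^2) / 2 := by
        rw [ENNReal.div_eq_inv_mul]
        ring
      rw [he]
      apply ENNReal.half_lt_self
      · exact mul_ne_zero hσ0 (by norm_num)
      · exact ENNReal.mul_ne_top hσtop (by norm_num)
    exact absurd (lt_of_le_of_lt h3 h4) (lt_irrefl _)
  obtain ⟨j, hjM, hq⟩ := hpig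
  set Pf : Finset (Fin d → ℤ) := Wf.filter (fun v => classFn v = j) with hPfdef
  have hPf_lo : ∀ v ∈ Pf, ((2:ℝ≥0∞)⁻¹)^(j+1) < mas v := by
    intro v hv
    obtain ⟨hvW, hvj⟩ := Finset.mem_filter.mp hv
    have := (hclass v hvW).2.2
    rwa [hvj] at this
  have hPf_hi : ∀ v ∈ Pf, mas v ≤ ((2:ℝ≥0∞)⁻¹)^j := by
    intro v hv
    obtain ⟨hvW, hvj⟩ := Finset.mem_filter.mp hv
    have := (hclass v hvW).2.1
    rwa [hvj] at this
  have hPfne : Pf.Nonempty := by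
    rcases Finset.eq_empty_or_nonempty Pf with he | hne
    · exfalso
      rw [he, Finset.sum_empty] at hq
      exact hq0 (le_antisymm hq (by positivity))
    · exact hne
  have hmas_pos : ∀ v ∈ Pf, mas v ≠ 0 := by
    intro v hv
    have := hPf_lo v hv
    exact fun h0 => by simp [h0] at this
  have hPfK : ∀ v ∈ Pf, (dyCube d n v ∩ K).Nonempty := by
    intro v hv
    obtain ⟨x, hx⟩ := nonempty_of_measure_ne_zero (hmas_pos v hv)
    exact ⟨x, hx.1⟩
  have hcard : q * (2:ℝ≥0∞)^j ≤ (Pf.card : ℝ≥0∞) := by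
    have h1 : ∑ v ∈ Pf, mas v ≤ (Pf.card : ℝ≥0∞) * ((2:ℝ≥0∞)⁻¹)^j := by
      calc ∑ v ∈ Pf, mas v ≤ Pf.card • ((2:ℝ≥0∞)⁻¹)^j :=
            Finset.sum_le_card_nsmul _ _ _ hPf_hi
        _ = (Pf.card : ℝ≥0∞) * ((2:ℝ≥0∞)⁻¹)^j := nsmul_eq_mul _ _
    have h2 : q ≤ (Pf.card : ℝ≥0∞) * ((2:ℝ≥0∞)⁻¹)^j := le_trans hq h1
    calc q * (2:ℝ≥0∞)^j ≤ ((Pf.card : ℝ≥0∞) * ((2:ℝ≥0∞)⁻¹)^j) * (2:ℝ≥0∞)^j :=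
          mul_le_mul_left h2 _
      _ = (Pf.card : ℝ≥0∞) * (((2:ℝ≥0∞)⁻¹)^j * (2:ℝ≥0∞)^j) := by ring
      _ = (Pf.card : ℝ≥0∞) := by
          rw [← mul_pow, ENNReal.inv_mul_cancel (by norm_num) (by norm_num), one_pow, mul_one]
  refine ⟨Pf, hPfne, hPfK, ?_⟩
  intro m hm w
  set F : Finset (Fin d → ℤ) := Pf.filter (fun v => dyCube d n v ⊆ dyCube d m w) with hFdef
  have hNcard : Nat.card {v : Fin d → ℤ // v ∈ Pf ∧ dyCube d n v ⊆ dyCube d m w}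
      = F.card := by
    have hiff : ∀ v : Fin d → ℤ, (v ∈ Pf ∧ dyCube d n v ⊆ dyCube d m w) ↔ v ∈ F := by
      intro v
      rw [hFdef]
      simp only [Finset.mem_filter]
    calc Nat.card {v : Fin d → ℤ // v ∈ Pf ∧ dyCube d n v ⊆ dyCube d m w}
        = Nat.card {v : Fin d → ℤ // v ∈ F} := Nat.card_congr (Equiv.subtypeEquivRight hiff)
      _ = F.card := by rw [Nat.card_eq_fintype_card, Fintype.card_coe]
  rw [hNcard]
  rcases Finset.eq_empty_or_nonempty F with hFe | hFne
  · rw [hFe]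
    simp only [Finset.card_empty, Nat.cast_zero]
    have h1 : (0:ℝ) ≤ (((2:ℝ) ^ n)⁻¹) ^ (-3 * ε) := Real.rpow_nonneg (by positivity) _
    have h2 : (0:ℝ) ≤ (((2:ℝ) ^ m)⁻¹) ^ s := Real.rpow_nonneg (by positivity) _
    have h3 : (0:ℝ) ≤ A * C := mul_nonneg hApos.le hC0
    exact mul_nonneg (mul_nonneg (mul_nonneg h3 h1) h2) (Nat.cast_nonneg _)
  -- main counting bound
  obtain ⟨v₀, hv₀⟩ := hFne
  have hv₀Pf : v₀ ∈ Pf := (Finset.mem_filter.mp hv₀).1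
  have hv₀sub : dyCube d n v₀ ⊆ dyCube d m w := (Finset.mem_filter.mp hv₀).2
  obtain ⟨x₀, hx₀⟩ := nonempty_of_measure_ne_zero (hmas_pos v₀ hv₀Pf)
  have hx₀Q : x₀ ∈ dyCube d m w := hv₀sub hx₀.1.1
  have hx₀G : x₀ ∈ Good := hx₀.2
  set r : ℝ := Real.sqrt d * ((2:ℝ)^m)⁻¹ with hrdef
  have hrd1 : (1:ℝ) ≤ Real.sqrt d := by
    rw [show (1:ℝ) = Real.sqrt 1 by simp]
    apply Real.sqrt_le_sqrt
    exact_mod_cast hd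
  have hrpos : 0 < r := by
    have : (0:ℝ) < ((2:ℝ)^m)⁻¹ := by positivity
    nlinarith
  have hδr : δ ≤ r := by
    have h1 : δ ≤ ((2:ℝ)^m)⁻¹ := by
      rw [hδdef]
      apply inv_anti₀ (by positivity)
      exact pow_le_pow_right₀ one_le_two hm
    calc δ ≤ ((2:ℝ)^m)⁻¹ := h1
      _ = 1 * ((2:ℝ)^m)⁻¹ := (one_mul _).symm
      _ ≤ r := by
          rw [hrdef]
          apply mul_le_mul_of_nonneg_right hrd1 (by positivity)
  have hcount : (F.card : ℝ≥0∞) * ((2:ℝ≥0∞)⁻¹)^(j+1) ≤ μ (closedBall x₀ r) := by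
    have h1 : (F.card : ℝ≥0∞) * ((2:ℝ≥0∞)⁻¹)^(j+1) ≤ ∑ v ∈ F, mas v := by
      rw [← nsmul_eq_mul]
      apply Finset.card_nsmul_le_sum
      intro v hv
      exact (hPf_lo v (Finset.mem_filter.mp hv).1).le
    have hdisj : (↑F : Set (Fin d → ℤ)).PairwiseDisjoint
        (fun v => dyCube d n v ∩ K ∩ Good) := by
      intro v _ w' _ hvw
      exact (dyCube_disjoint hvw).mono
        (Set.inter_subset_left.trans Set.inter_subset_left)
        (Set.inter_subset_left.trans Set.inter_subset_left)
    have h2 : ∑ v ∈ F, mas v = μ (⋃ v ∈ F, (dyCube d n v ∩ K ∩ Good)) :=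
      (measure_biUnion_finset hdisj (fun v _ => hmas_meas v)).symm
    have h3 : (⋃ v ∈ F, (dyCube d n v ∩ K ∩ Good)) ⊆ closedBall x₀ r := by
      intro x hx
      obtain ⟨v, hvF, hxv⟩ := Set.mem_iUnion₂.mp hx
      have hvsub : dyCube d n v ⊆ dyCube d m w := (Finset.mem_filter.mp hvF).2
      have hxQ : x ∈ dyCube d m w := hvsub hxv.1.1
      rw [mem_closedBall]
      exact dyCube_dist hxQ hx₀Q
    calc (F.card : ℝ≥0∞) * ((2:ℝ≥0∞)⁻¹)^(j+1) ≤ ∑ v ∈ F, mas v := h1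
      _ = μ (⋃ v ∈ F, (dyCube d n v ∩ K ∩ Good)) := h2
      _ ≤ μ (closedBall x₀ r) := measure_mono h3
  have hball : μ (closedBall x₀ r) ≤ T * ENNReal.ofReal (r^s) := by
    have hUB : ENNReal.ofReal (r^(-s)) * μ (closedBall x₀ r) ≤ UU x₀ := by
      have hmeas_kk : Measurable fun y => ENNReal.ofReal ((max (dist x₀ y) δ) ^ (-s)) := by
        apply Measurable.ennreal_ofReal
        apply Continuous.measurable
        apply Continuous.rpow_const ((continuous_const.dist continuous_id).max continuous_const)
        intro y
        exact Or.inl (lt_of_lt_of_le hδpos (le_max_right _ _)).ne'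
      calc ENNReal.ofReal (r^(-s)) * μ (closedBall x₀ r)
          = ∫⁻ _ in closedBall x₀ r, ENNReal.ofReal (r^(-s)) ∂μ := by
            rw [setLIntegral_const]
        _ ≤ ∫⁻ y in closedBall x₀ r, ENNReal.ofReal ((max (dist x₀ y) δ) ^ (-s)) ∂μ := by
            apply setLIntegral_mono hmeas_kk
            intro y hy
            apply ENNReal.ofReal_le_ofReal
            rw [Real.rpow_neg hrpos.le, Real.rpow_neg (by positivity :
              (0:ℝ) ≤ max (dist x₀ y) δ)]
            apply inv_anti₀
            · apply Real.rpow_pos_of_pos (lt_of_lt_of_le hδpos (le_max_right _ _))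
            · apply Real.rpow_le_rpow (by positivity) ?_ hs0.le
              apply max_le (mem_closedBall'.mp hy) hδr
        _ ≤ UU x₀ := setLIntegral_le_lintegral _ _
    have hx₀T : UU x₀ < T := hx₀G
    have hrs : ENNReal.ofReal (r^s) * ENNReal.ofReal (r^(-s)) = 1 := by
      rw [← ENNReal.ofReal_mul (by positivity), ← Real.rpow_add hrpos, add_neg_cancel,
        Real.rpow_zero]
      simp
    calc μ (closedBall x₀ r)
        = (ENNReal.ofReal (r^s) * ENNReal.ofReal (r^(-s))) * μ (closedBall x₀ r) := by
          rw [hrs, one_mul]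
      _ = ENNReal.ofReal (r^s) * (ENNReal.ofReal (r^(-s)) * μ (closedBall x₀ r)) := by ring
      _ ≤ ENNReal.ofReal (r^s) * UU x₀ := mul_le_mul_right hUB _
      _ ≤ ENNReal.ofReal (r^s) * T := mul_le_mul_right hx₀T.le _
      _ = T * ENNReal.ofReal (r^s) := mul_comm _ _
  -- combine everything
  have hq_inv : q⁻¹ = σ⁻¹ * 2^3 * (M:ℝ≥0∞) := by
    rw [hqdef]
    rw [ENNReal.mul_inv (Or.inl (mul_ne_zero hσ0 (by norm_num)))
      (Or.inl (ENNReal.mul_ne_top hσtop (by norm_num)))]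
    rw [ENNReal.mul_inv (Or.inl hσ0) (Or.inl hσtop)]
    rw [inv_inv, ENNReal.inv_pow, inv_inv]
  have h2j : (2:ℝ≥0∞)^j ≤ q⁻¹ * (Pf.card : ℝ≥0∞) := by
    calc (2:ℝ≥0∞)^j = q⁻¹ * (q * (2:ℝ≥0∞)^j) := by
          rw [← mul_assoc, ENNReal.inv_mul_cancel hq0 hqtop, one_mul]
      _ ≤ q⁻¹ * (Pf.card : ℝ≥0∞) := mul_le_mul_right hcard _
  have hfinal : (F.card : ℝ≥0∞)
      ≤ (32 * (M:ℝ≥0∞)) * (c⁻¹ * ENNReal.ofReal C) * σ⁻¹ * σ⁻¹ *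
        ENNReal.ofReal (r^s) * (Pf.card : ℝ≥0∞) := by
    have h1 : (F.card : ℝ≥0∞) = (F.card : ℝ≥0∞) * (((2:ℝ≥0∞)⁻¹)^(j+1) * 2^(j+1)) := by
      rw [← mul_pow, ENNReal.inv_mul_cancel (by norm_num) (by norm_num), one_pow, mul_one]
    calc (F.card : ℝ≥0∞)
        = ((F.card : ℝ≥0∞) * ((2:ℝ≥0∞)⁻¹)^(j+1)) * 2^(j+1) := by
          conv_rhs => rw [mul_assoc, ← h1]
      _ ≤ (T * ENNReal.ofReal (r^s)) * 2^(j+1) :=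
          mul_le_mul_left (le_trans hcount hball) _
      _ = (T * ENNReal.ofReal (r^s) * 2) * 2^j := by rw [pow_succ]; ring
      _ ≤ (T * ENNReal.ofReal (r^s) * 2) * (q⁻¹ * (Pf.card : ℝ≥0∞)) :=
          mul_le_mul_right h2j _
      _ = (32 * (M:ℝ≥0∞)) * (c⁻¹ * ENNReal.ofReal C) * σ⁻¹ * σ⁻¹ *
          ENNReal.ofReal (r^s) * (Pf.card : ℝ≥0∞) := by
          rw [hTdef, hE₀def, hq_inv]
          ring
  have h32M : (32 * (M:ℝ≥0∞)) ≤ σ⁻¹ := by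
    have h1 : σ⁻¹ = ENNReal.ofReal ((δ^ε)⁻¹) := by
      rw [hσdef, ENNReal.ofReal_inv_of_pos hδεpos]
    rw [h1]
    have h2 : (32 * (M:ℝ≥0∞)) = ENNReal.ofReal (32 * (M:ℕ)) := by
      rw [ENNReal.ofReal_mul (by norm_num), ENNReal.ofReal_natCast]
      congr 1
      norm_num
    rw [h2]
    apply ENNReal.ofReal_le_ofReal
    calc (32:ℝ) * (M:ℕ) = 32 * ((n+2)*((d:ℝ)+1)) := by rw [hMdef]; push_cast; ring
      _ ≤ (δ^ε)⁻¹ := hMreal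
  have hσinv : σ⁻¹ = ENNReal.ofReal ((δ^ε)⁻¹) := by
    rw [hσdef, ENNReal.ofReal_inv_of_pos hδεpos]
  have hcinv : c⁻¹ = ENNReal.ofReal ((2:ℝ)^(3*d) * (B⁻¹)^2) := by
    rw [hc_eq, ← ENNReal.ofReal_inv_of_pos hcreal_pos]
    congr 1
    field_simp
  set R : ℝ := (δ^ε)⁻¹ * (δ^ε)⁻¹ * (δ^ε)⁻¹ * ((2:ℝ)^(3*d) * (B⁻¹)^2) * C * (r^s) *
    (Pf.card : ℝ) with hRdef
  have e1 : (0:ℝ) ≤ (δ^ε)⁻¹ := by positivity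
  have e2 : (0:ℝ) ≤ (δ^ε)⁻¹ * (δ^ε)⁻¹ := by positivity
  have e3 : (0:ℝ) ≤ (δ^ε)⁻¹ * (δ^ε)⁻¹ * (δ^ε)⁻¹ := by positivity
  have e4 : (0:ℝ) ≤ (δ^ε)⁻¹ * (δ^ε)⁻¹ * (δ^ε)⁻¹ * ((2:ℝ)^(3*d) * (B⁻¹)^2) := by positivity
  have e5 : (0:ℝ) ≤ (δ^ε)⁻¹ * (δ^ε)⁻¹ * (δ^ε)⁻¹ * ((2:ℝ)^(3*d) * (B⁻¹)^2) * C :=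
    mul_nonneg e4 hC0
  have e6 : (0:ℝ) ≤ (δ^ε)⁻¹ * (δ^ε)⁻¹ * (δ^ε)⁻¹ * ((2:ℝ)^(3*d) * (B⁻¹)^2) * C * (r^s) :=
    mul_nonneg e5 (Real.rpow_nonneg hrpos.le s)
  have hcomb : ENNReal.ofReal ((δ^ε)⁻¹) * ENNReal.ofReal ((δ^ε)⁻¹) *
      ENNReal.ofReal ((δ^ε)⁻¹) * ENNReal.ofReal ((2:ℝ)^(3*d) * (B⁻¹)^2) *
      ENNReal.ofReal C * ENNReal.ofReal (r^s) * ENNReal.ofReal ((Pf.card : ℝ))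
      = ENNReal.ofReal R := by
    rw [hRdef, ENNReal.ofReal_mul e6, ENNReal.ofReal_mul e5, ENNReal.ofReal_mul e4,
      ENNReal.ofReal_mul e3, ENNReal.ofReal_mul e2, ENNReal.ofReal_mul e1]
  have hfinal2 : (F.card : ℝ≥0∞) ≤ ENNReal.ofReal R := by
    calc (F.card : ℝ≥0∞)
        ≤ (32 * (M:ℝ≥0∞)) * (c⁻¹ * ENNReal.ofReal C) * σ⁻¹ * σ⁻¹ *
          ENNReal.ofReal (r^s) * (Pf.card : ℝ≥0∞) := hfinal
      _ ≤ σ⁻¹ * (c⁻¹ * ENNReal.ofReal C) * σ⁻¹ * σ⁻¹ *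
          ENNReal.ofReal (r^s) * (Pf.card : ℝ≥0∞) := by
          apply mul_le_mul_left
          apply mul_le_mul_left
          apply mul_le_mul_left
          apply mul_le_mul_left
          exact mul_le_mul_left h32M _
      _ = ENNReal.ofReal R := by
          rw [hσinv, hcinv, ← ENNReal.ofReal_natCast Pf.card, ← hcomb]
          ring
  have hRHS0 : (0:ℝ) ≤ R := by
    rw [hRdef]
    exact mul_nonneg e6 (Nat.cast_nonneg _)
  have hreal_bound : (F.card : ℝ) ≤ R := by
    rw [← ENNReal.ofReal_le_ofReal_iff hRHS0, ENNReal.ofReal_natCast]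
    exact hfinal2
  -- translate to the required form
  have hcube : (δ^ε)⁻¹ * (δ^ε)⁻¹ * (δ^ε)⁻¹ = δ ^ (-3 * ε) := by
    rw [← Real.rpow_neg hδpos.le]
    rw [show (-3 : ℝ) * ε = (-ε) + ((-ε) + (-ε)) by ring, Real.rpow_add hδpos,
      Real.rpow_add hδpos]
    ring
  have hrs_bound : r^s ≤ (d:ℝ)^((d:ℝ)/2) * (((2:ℝ)^m)⁻¹)^s := by
    rw [hrdef, Real.mul_rpow (Real.sqrt_nonneg _) (by positivity)]
    apply mul_le_mul_of_nonneg_right ?_ (Real.rpow_nonneg (by positivity) _)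
    rw [Real.sqrt_eq_rpow, ← Real.rpow_mul (Nat.cast_nonneg d)]
    apply Real.rpow_le_rpow_of_exponent_le (by exact_mod_cast hd)
    linarith
  calc (F.card : ℝ) ≤ R := hreal_bound
    _ ≤ (δ^ε)⁻¹ * (δ^ε)⁻¹ * (δ^ε)⁻¹ * ((2:ℝ)^(3*d) * (B⁻¹)^2) * C *
        ((d:ℝ)^((d:ℝ)/2) * (((2:ℝ)^m)⁻¹)^s) * (Pf.card : ℝ) := by
        rw [hRdef]
        apply mul_le_mul_of_nonneg_right ?_ (Nat.cast_nonneg _)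
        apply mul_le_mul_of_nonneg_left hrs_bound
        exact mul_nonneg (by positivity) hC0
    _ = (A * C * δ ^ (-3 * ε)) * (((2:ℝ)^m)⁻¹)^s * (Pf.card : ℝ) := by
        rw [← hcube, hAdef]
        ring
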